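/- Suppose X is at most countable and [x] = c·x + O(x^α) for some constant c > 0 and some α ∈ [0, 1). Then for every K ∈ I_X with K ≠ 0, the series Σ_{M ∈ I_X} C_K(M)/N(M) converges and equals −c·Λ(K), where Λ(K) = Σ_{D ∈ I_X, D ≤ K} μ(K − D)·log N(D). -/

import Mathlib

set_option maxHeartbeats 1000000

open Finset Filter Topology Asymptotics
open scoped Classical

/-- The Möbius function on `I_X = X →₀ ℕ`: `μ A = (-1)^(∑ₓ A x)` if `A x ≤ 1`
for every `x`, and `0` otherwise. -/
noncomputable def mob {X : Type*} (A : X →₀ ℕ) : ℤ :=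
  if ∀ x, A x ≤ 1 then (-1) ^ (A.sum fun _ n => n) else 0

/-- The generalized Ramanujan sum `C_K(M) = ∑_{D ≤ M, D ≤ K} N(D)·μ(K − D)`. -/
noncomputable def ram {X : Type*} [DecidableEq X] (Nrm : (X →₀ ℕ) → ℤ)
    (K M : X →₀ ℕ) : ℤ :=
  ∑ D ∈ Finset.Iic (M ⊓ K), Nrm D * mob (K - D)


lemma mob_add_single {X : Type*} [DecidableEq X] (E : X →₀ ℕ) (x₀ : X) (h : E x₀ = 0) :
    mob (E + Finsupp.single x₀ 1) = - mob E := by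
  set F : X →₀ ℕ := E + Finsupp.single x₀ 1 with hF
  have happ : ∀ x, F x = if x = x₀ then 1 else E x := by
    intro x
    rw [hF, Finsupp.add_apply, Finsupp.single_apply]
    by_cases hx : x = x₀
    · subst hx; simp [h]
    · rw [if_neg (Ne.symm hx), add_zero, if_neg hx]
  by_cases hall : ∀ x, E x ≤ 1
  · have hall' : ∀ x, F x ≤ 1 := by
      intro x; rw [happ x]; split <;> [exact le_refl 1; exact hall x]
    have hsum : (F.sum fun _ n => n) = (E.sum fun _ n => n) + 1 := by
      rw [hF, Finsupp.sum_add_index' (fun _ => rfl) (fun _ _ _ => rfl),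
        Finsupp.sum_single_index rfl]
    simp only [mob, if_pos hall, if_pos hall', hsum, pow_succ]
    ring
  · have hall' : ¬ ∀ x, F x ≤ 1 := by
      push_neg at hall ⊢
      obtain ⟨x, hx⟩ := hall
      have hxne : x ≠ x₀ := by rintro rfl; omega
      exact ⟨x, by rw [happ x, if_neg hxne]; exact hx⟩
    simp [mob, hall, hall']

lemma sum_mob_eq_zero {X : Type*} [DecidableEq X] (K : X →₀ ℕ) (hK : K ≠ 0) :
    ∑ E ∈ Finset.Iic K, mob E = 0 := by
  obtain ⟨x₀, hx₀⟩ := Finsupp.support_nonempty_iff.2 hK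
  have hKx₀ : 1 ≤ K x₀ := Nat.one_le_iff_ne_zero.2 (Finsupp.mem_support_iff.1 hx₀)
  have hle : ∀ E : X →₀ ℕ, E x₀ = 1 → Finsupp.single x₀ 1 ≤ E := by
    intro E hE; rw [Finsupp.single_le_iff, hE]
  have hsub0 : ∀ E : X →₀ ℕ, (E - Finsupp.single x₀ 1 : X →₀ ℕ) x₀ = E x₀ - 1 := by
    intro E; rw [Finsupp.tsub_apply, Finsupp.single_apply, if_pos rfl]
  have haddapp : ∀ E : X →₀ ℕ, (E + Finsupp.single x₀ 1 : X →₀ ℕ) x₀ = E x₀ + 1 := by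
    intro E; rw [Finsupp.add_apply, Finsupp.single_apply, if_pos rfl]
  refine Finset.sum_involution
    (fun E _ => if E x₀ = 0 then E + Finsupp.single x₀ 1
      else if E x₀ = 1 then E - Finsupp.single x₀ 1 else E) ?_ ?_ ?_ ?_
  · intro E hE
    by_cases h0 : E x₀ = 0
    · simp only [if_pos h0]
      rw [mob_add_single E x₀ h0]; ring
    · by_cases h1 : E x₀ = 1
      · simp only [if_neg h0, if_pos h1]
        have hsub : (E - Finsupp.single x₀ 1 : X →₀ ℕ) x₀ = 0 := by rw [hsub0, h1]
        have hadd : (E - Finsupp.single x₀ 1) + Finsupp.single x₀ 1 = E :=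
          tsub_add_cancel_of_le (hle E h1)
        have h2 := mob_add_single (E - Finsupp.single x₀ 1) x₀ hsub
        rw [hadd] at h2
        rw [h2]; ring
      · have hmob : mob E = 0 := by
          rw [mob, if_neg]; push_neg; exact ⟨x₀, by omega⟩
        simp only [if_neg h0, if_neg h1, hmob]; ring
  · intro E hE hne
    have hall : ∀ x, E x ≤ 1 := by
      by_contra hc; exact hne (by rw [mob, if_neg hc])
    by_cases h0 : E x₀ = 0
    · simp only [if_pos h0]
      intro hEq
      have h2 := congrArg (fun f : X →₀ ℕ => f x₀) hEq
      simp only [haddapp] at h2; omega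
    · have h1 : E x₀ = 1 := by have := hall x₀; omega
      simp only [if_neg h0, if_pos h1]
      intro hEq
      have h2 := congrArg (fun f : X →₀ ℕ => f x₀) hEq
      simp only [hsub0] at h2; omega
  · intro E hE
    rw [Finset.mem_Iic] at hE ⊢
    by_cases h0 : E x₀ = 0
    · simp only [if_pos h0]
      intro x
      by_cases hx : x = x₀
      · subst hx
        rw [haddapp, h0]; exact hKx₀
      · rw [Finsupp.add_apply, Finsupp.single_apply, if_neg (Ne.symm hx), add_zero]
        exact hE x
    · by_cases h1 : E x₀ = 1
      · simp only [if_neg h0, if_pos h1]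
        exact le_trans tsub_le_self hE
      · simp only [if_neg h0, if_neg h1]; exact hE
  · intro E hE
    by_cases h0 : E x₀ = 0
    · simp only [if_pos h0]
      have happ : (E + Finsupp.single x₀ 1 : X →₀ ℕ) x₀ = 1 := by rw [haddapp, h0]
      simp only [happ, if_neg (by omega : ¬ (1:ℕ) = 0), if_pos rfl]
      exact add_tsub_cancel_right E (Finsupp.single x₀ 1)
    · by_cases h1 : E x₀ = 1
      · simp only [if_neg h0, if_pos h1]
        have happ : (E - Finsupp.single x₀ 1 : X →₀ ℕ) x₀ = 0 := by rw [hsub0, h1]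
        simp only [happ, if_pos rfl]
        exact tsub_add_cancel_of_le (hle E h1)
      · simp only [if_neg h0, if_neg h1, if_neg h0, if_neg h1]

lemma sum_mob_sub_eq_zero {X : Type*} [DecidableEq X] (K : X →₀ ℕ) (hK : K ≠ 0) :
    ∑ D ∈ Finset.Iic K, mob (K - D) = 0 := by
  rw [← sum_mob_eq_zero K hK]
  refine Finset.sum_nbij' (fun D => K - D) (fun E => K - E)
    (fun A hA => ?_) (fun A hA => ?_) (fun A hA => ?_) (fun A hA => ?_) (fun A hA => rfl)
  · exact Finset.mem_Iic.2 tsub_le_self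
  · exact Finset.mem_Iic.2 tsub_le_self
  · exact tsub_tsub_cancel_of_le (Finset.mem_Iic.1 hA)
  · exact tsub_tsub_cancel_of_le (Finset.mem_Iic.1 hA)


lemma sum_ram_eq {X : Type*} [DecidableEq X] (Nrm : (X →₀ ℕ) → ℤ)
    (hge : ∀ A, 1 ≤ Nrm A) (hmul : ∀ A B, Nrm (A + B) = Nrm A * Nrm B)
    (hfin : ∀ x : ℝ, {A : X →₀ ℕ | (Nrm A : ℝ) ≤ x}.Finite)
    (K : X →₀ ℕ) (x : ℝ) :
    ∑ M ∈ (hfin x).toFinset, (ram Nrm K M : ℝ) / (Nrm M : ℝ)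
      = ∑ D ∈ Finset.Iic K, (mob (K - D) : ℝ) *
          ∑ M ∈ (hfin (x / (Nrm D : ℝ))).toFinset, 1 / (Nrm M : ℝ) := by
  have hpos : ∀ A, (0:ℝ) < (Nrm A : ℝ) := by
    intro A; exact_mod_cast lt_of_lt_of_le one_pos (hge A)
  have hmulsub : ∀ (D M : X →₀ ℕ), D ≤ M → (Nrm M : ℝ) = (Nrm D : ℝ) * (Nrm (M - D) : ℝ) := by
    intro D M hDM
    have h1 : D + (M - D) = M := add_tsub_cancel_of_le hDM
    have := hmul D (M - D)
    rw [h1] at this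
    exact_mod_cast this
  have step1 : ∀ M : X →₀ ℕ, (ram Nrm K M : ℝ) / (Nrm M : ℝ)
      = ∑ D ∈ Finset.Iic K,
          (if D ≤ M then (mob (K-D) : ℝ) * ((Nrm D : ℝ)/(Nrm M : ℝ)) else 0) := by
    intro M
    have hIic : Finset.Iic (M ⊓ K) = (Finset.Iic K).filter (fun D => D ≤ M) := by
      ext D
      simp only [Finset.mem_Iic, Finset.mem_filter, le_inf_iff]
      tauto
    rw [ram, hIic]
    push_cast
    rw [Finset.sum_div, Finset.sum_filter]
    refine Finset.sum_congr rfl fun D _ => ?_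
    split
    · ring
    · rfl
  have step2 : ∀ D : X →₀ ℕ,
      ∑ M ∈ (hfin x).toFinset.filter (fun M => D ≤ M), (Nrm D : ℝ)/(Nrm M : ℝ)
        = ∑ M ∈ (hfin (x / (Nrm D : ℝ))).toFinset, 1/(Nrm M : ℝ) := by
    intro D
    refine Finset.sum_nbij' (fun M => M - D) (fun M' => D + M') ?_ ?_ ?_ ?_ ?_
    · intro M hM
      obtain ⟨hMx, hDM⟩ := Finset.mem_filter.1 hM
      rw [Set.Finite.mem_toFinset, Set.mem_setOf_eq] at hMx ⊢
      rw [le_div_iff₀ (hpos D), mul_comm, ← hmulsub D M hDM]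
      exact hMx
    · intro M' hM'
      rw [Set.Finite.mem_toFinset, Set.mem_setOf_eq] at hM'
      rw [Finset.mem_filter, Set.Finite.mem_toFinset, Set.mem_setOf_eq]
      constructor
      · have : ((Nrm (D + M') : ℝ)) = (Nrm D : ℝ) * (Nrm M' : ℝ) := by
          exact_mod_cast hmul D M'
        rw [this, mul_comm]
        exact (le_div_iff₀ (hpos D)).1 hM'
      · exact le_add_right le_rfl
    · intro M hM
      exact add_tsub_cancel_of_le (Finset.mem_filter.1 hM).2
    · intro M' _
      exact add_tsub_cancel_left D M'
    · intro M hM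
      have hDM := (Finset.mem_filter.1 hM).2
      rw [hmulsub D M hDM, div_mul_eq_div_div, div_self (ne_of_gt (hpos D))]
  calc ∑ M ∈ (hfin x).toFinset, (ram Nrm K M : ℝ) / (Nrm M : ℝ)
      = ∑ M ∈ (hfin x).toFinset, ∑ D ∈ Finset.Iic K,
          (if D ≤ M then (mob (K-D) : ℝ) * ((Nrm D : ℝ)/(Nrm M : ℝ)) else 0) := by
        exact Finset.sum_congr rfl fun M _ => step1 M
    _ = ∑ D ∈ Finset.Iic K, ∑ M ∈ (hfin x).toFinset,
          (if D ≤ M then (mob (K-D) : ℝ) * ((Nrm D : ℝ)/(Nrm M : ℝ)) else 0) :=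
        Finset.sum_comm
    _ = ∑ D ∈ Finset.Iic K, (mob (K - D) : ℝ) *
          ∑ M ∈ (hfin x).toFinset.filter (fun M => D ≤ M), (Nrm D : ℝ)/(Nrm M : ℝ) := by
        refine Finset.sum_congr rfl fun D _ => ?_
        rw [← Finset.sum_filter, Finset.mul_sum]
    _ = _ := Finset.sum_congr rfl fun D _ => by rw [step2 D]


lemma tele_inv (a : ℕ) : ∀ b : ℕ, a ≤ b →
    ∑ m ∈ Finset.Ico a b, ((1:ℝ)/m - 1/((m:ℝ)+1)) = 1/a - 1/b := by
  refine Nat.le_induction ?_ ?_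
  · simp
  · intro b hab ih
    rw [Finset.sum_Ico_succ_top hab, ih]
    push_cast
    ring

lemma tele_log (a : ℕ) : ∀ b : ℕ, a ≤ b →
    ∑ m ∈ Finset.Ico a b, (Real.log ((m:ℝ)+1) - Real.log m) = Real.log b - Real.log a := by
  refine Nat.le_induction ?_ ?_
  · simp
  · intro b hab ih
    rw [Finset.sum_Ico_succ_top hab, ih]
    push_cast
    ring

section Key
set_option linter.unusedSectionVars false
variable {X : Type*} [DecidableEq X] (Nrm : (X →₀ ℕ) → ℤ)
    (hge : ∀ A, 1 ≤ Nrm A)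
    (hfin : ∀ x : ℝ, {A : X →₀ ℕ | (Nrm A : ℝ) ≤ x}.Finite)

lemma hmem_lemma : ∀ (y : ℝ) (M : X →₀ ℕ), M ∈ (hfin y).toFinset ↔ (Nrm M : ℝ) ≤ y := by
  intro y M; rw [Set.Finite.mem_toFinset]; rfl

lemma hFsub_lemma : ∀ a b : ℝ, a ≤ b → (hfin a).toFinset ⊆ (hfin b).toFinset := by
  intro a b hab M hM
  rw [hmem_lemma Nrm hfin] at hM ⊢
  exact le_trans hM hab

include hge in
lemma abel_identity (n : ℕ) (q : ℕ) (hp1 : 1 ≤ q / n) :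
    (∑ M ∈ (hfin ((q:ℕ):ℝ)).toFinset, 1 / (Nrm M : ℝ))
      - (∑ M ∈ (hfin ((q/n:ℕ):ℝ)).toFinset, 1 / (Nrm M : ℝ))
    = (((hfin ((q:ℕ):ℝ)).toFinset.card : ℝ) - ((hfin ((q/n:ℕ):ℝ)).toFinset.card : ℝ))/(q:ℝ)
      + ∑ m ∈ Finset.Ico (q/n) q,
          (((hfin ((m:ℕ):ℝ)).toFinset.card : ℝ) - ((hfin ((q/n:ℕ):ℝ)).toFinset.card : ℝ))
            * (1/(m:ℝ) - 1/((m:ℝ)+1)) := by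
  have hmem := hmem_lemma Nrm hfin
  have hFsub := hFsub_lemma Nrm hfin
  set p := q / n with hpdef
  have hpq : p ≤ q := Nat.div_le_self q n
  have hq1 : 1 ≤ q := le_trans hp1 hpq
  set F : Finset (X →₀ ℕ) := (hfin (q:ℝ)).toFinset \ (hfin (p:ℝ)).toFinset with hF
  have hsub : (hfin (p:ℝ)).toFinset ⊆ (hfin (q:ℝ)).toFinset :=
    hFsub _ _ (by exact_mod_cast hpq)
  rw [← Finset.sum_sdiff_eq_sub hsub]
  -- per-element expansion
  have h2 : ∀ M ∈ F, (1:ℝ) / (Nrm M : ℝ) = 1/(q:ℝ)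
      + ∑ m ∈ Finset.Ico p q,
          (if (Nrm M : ℝ) ≤ (m:ℝ) then (1/(m:ℝ) - 1/((m:ℝ)+1)) else 0) := by
    intro M hM
    rw [hF, Finset.mem_sdiff, hmem, hmem] at hM
    obtain ⟨hMq, hMp⟩ := hM
    set k : ℕ := (Nrm M).toNat with hk
    have hkcast : ((k:ℕ) : ℝ) = (Nrm M : ℝ) := by
      rw [hk]
      exact_mod_cast Int.toNat_of_nonneg (le_trans zero_le_one (hge M))
    have hpk : p < k := by
      have : (p:ℝ) < (k:ℝ) := by rw [hkcast]; exact lt_of_not_ge hMp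
      exact_mod_cast this
    have hkq : k ≤ q := by
      rw [← Nat.cast_le (α := ℝ), hkcast]
      exact hMq
    have hsplit : ∑ m ∈ Finset.Ico p q,
          (if (Nrm M : ℝ) ≤ (m:ℝ) then (1/(m:ℝ) - 1/((m:ℝ)+1)) else 0)
        = ∑ m ∈ Finset.Ico k q, (1/(m:ℝ) - 1/((m:ℝ)+1)) := by
      rw [← Finset.sum_Ico_consecutive _ (le_of_lt hpk) hkq]
      have hz : ∑ m ∈ Finset.Ico p k,
          (if (Nrm M : ℝ) ≤ (m:ℝ) then (1/(m:ℝ) - 1/((m:ℝ)+1)) else 0) = 0 := by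
        refine Finset.sum_eq_zero fun m hm => ?_
        rw [if_neg]
        rw [← hkcast, Nat.cast_le]
        exact Nat.not_le.2 (Finset.mem_Ico.1 hm).2
      have ho : ∑ m ∈ Finset.Ico k q,
          (if (Nrm M : ℝ) ≤ (m:ℝ) then (1/(m:ℝ) - 1/((m:ℝ)+1)) else 0)
          = ∑ m ∈ Finset.Ico k q, (1/(m:ℝ) - 1/((m:ℝ)+1)) := by
        refine Finset.sum_congr rfl fun m hm => ?_
        rw [if_pos]
        rw [← hkcast, Nat.cast_le]
        exact (Finset.mem_Ico.1 hm).1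
      rw [hz, ho, zero_add]
    rw [hsplit, tele_inv k q hkq, ← hkcast]
    ring
  rw [Finset.sum_congr rfl h2, Finset.sum_add_distrib, Finset.sum_const, Finset.sum_comm]
  have hcard : ∀ m : ℕ, p ≤ m → m ≤ q →
      ((F.filter (fun M => (Nrm M : ℝ) ≤ (m:ℝ))).card : ℝ)
        = ((hfin ((m:ℕ):ℝ)).toFinset.card : ℝ) - ((hfin ((p:ℕ):ℝ)).toFinset.card : ℝ) := by
    intro m hpm hmq
    have hfilt : F.filter (fun M => (Nrm M : ℝ) ≤ (m:ℝ))
        = (hfin ((m:ℕ):ℝ)).toFinset \ (hfin ((p:ℕ):ℝ)).toFinset := by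
      ext M
      rw [Finset.mem_filter, hF, Finset.mem_sdiff, Finset.mem_sdiff, hmem, hmem, hmem]
      have hmq' : (m:ℝ) ≤ (q:ℝ) := Nat.cast_le.2 hmq
      constructor
      · rintro ⟨⟨_, h2'⟩, h3'⟩; exact ⟨h3', h2'⟩
      · rintro ⟨h1', h2'⟩; exact ⟨⟨le_trans h1' hmq', h2'⟩, h1'⟩
    have hsub' : (hfin ((p:ℕ):ℝ)).toFinset ⊆ (hfin ((m:ℕ):ℝ)).toFinset :=
      hFsub _ _ (Nat.cast_le.2 hpm)
    rw [hfilt, Finset.card_sdiff_of_subset hsub', Nat.cast_sub (Finset.card_le_card hsub')]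
  have hcardF : (F.card : ℝ)
      = ((hfin ((q:ℕ):ℝ)).toFinset.card : ℝ) - ((hfin ((p:ℕ):ℝ)).toFinset.card : ℝ) := by
    rw [hF, Finset.card_sdiff_of_subset hsub, Nat.cast_sub (Finset.card_le_card hsub)]
  congr 1
  · rw [nsmul_eq_mul, hcardF, mul_one_div]
  · refine Finset.sum_congr rfl fun m hm => ?_
    rw [← Finset.sum_filter, Finset.sum_const, nsmul_eq_mul,
      hcard m (Finset.mem_Ico.1 hm).1 (le_of_lt (Finset.mem_Ico.1 hm).2)]

include hge in
lemma decomp_identity (c : ℝ) (n q : ℕ) (hp1 : 1 ≤ q / n) :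
    (∑ M ∈ (hfin ((q:ℕ):ℝ)).toFinset, 1 / (Nrm M : ℝ))
      - (∑ M ∈ (hfin ((q/n:ℕ):ℝ)).toFinset, 1 / (Nrm M : ℝ))
    = c * (∑ m ∈ Finset.Ico (q/n) q, 1/((m:ℝ)+1))
      + (((((hfin ((q:ℕ):ℝ)).toFinset.card : ℝ) - c*(q:ℝ))
          - (((hfin ((q/n:ℕ):ℝ)).toFinset.card : ℝ) - c*((q/n:ℕ):ℝ)))/(q:ℝ)
      + ∑ m ∈ Finset.Ico (q/n) q,
          ((((hfin ((m:ℕ):ℝ)).toFinset.card : ℝ) - c*(m:ℝ))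
            - (((hfin ((q/n:ℕ):ℝ)).toFinset.card : ℝ) - c*((q/n:ℕ):ℝ)))
            * (1/(m:ℝ) - 1/((m:ℝ)+1))) := by
  rw [abel_identity Nrm hge hfin n q hp1]
  set p := q / n with hpdef
  have hpq : p ≤ q := Nat.div_le_self q n
  have hq1 : 1 ≤ q := le_trans hp1 hpq
  have hq0 : ((q:ℝ)) ≠ 0 := by
    simp only [ne_eq, Nat.cast_eq_zero]; omega
  have hp0 : ((p:ℝ)) ≠ 0 := by
    simp only [ne_eq, Nat.cast_eq_zero]; omega
  set cq : ℝ := ((hfin ((q:ℕ):ℝ)).toFinset.card : ℝ) with hcq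
  set cp : ℝ := ((hfin ((p:ℕ):ℝ)).toFinset.card : ℝ) with hcp
  have hterm : ∀ m ∈ Finset.Ico p q, ((m:ℝ) - (p:ℝ)) * (1/(m:ℝ) - 1/((m:ℝ)+1))
      = 1/((m:ℝ)+1) - (p:ℝ)*(1/(m:ℝ) - 1/((m:ℝ)+1)) := by
    intro m hm
    have hm1 : 1 ≤ m := le_trans hp1 (Finset.mem_Ico.1 hm).1
    have hm0 : ((m:ℝ)) ≠ 0 := by
      simp only [ne_eq, Nat.cast_eq_zero]; omega
    have hm10 : ((m:ℝ)+1) ≠ 0 := by positivity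
    field_simp
    ring
  have key : ((q:ℝ) - (p:ℝ))/(q:ℝ)
      + ∑ m ∈ Finset.Ico p q, ((m:ℝ) - (p:ℝ)) * (1/(m:ℝ) - 1/((m:ℝ)+1))
      = ∑ m ∈ Finset.Ico p q, 1/((m:ℝ)+1) := by
    rw [Finset.sum_congr rfl hterm, Finset.sum_sub_distrib, ← Finset.mul_sum,
      tele_inv p q hpq]
    field_simp
    ring
  have hsum1 : ∑ m ∈ Finset.Ico p q,
        ((((hfin ((m:ℕ):ℝ)).toFinset.card : ℝ)) - cp) * (1/(m:ℝ) - 1/((m:ℝ)+1))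
      = (∑ m ∈ Finset.Ico p q,
          ((((hfin ((m:ℕ):ℝ)).toFinset.card : ℝ) - c*(m:ℝ)) - (cp - c*(p:ℝ)))
            * (1/(m:ℝ) - 1/((m:ℝ)+1)))
        + c * ∑ m ∈ Finset.Ico p q, ((m:ℝ) - (p:ℝ)) * (1/(m:ℝ) - 1/((m:ℝ)+1)) := by
    rw [Finset.mul_sum, ← Finset.sum_add_distrib]
    exact Finset.sum_congr rfl fun m _ => by ring
  have hdiv1 : (cq - cp)/(q:ℝ)
      = ((cq - c*(q:ℝ)) - (cp - c*(p:ℝ)))/(q:ℝ) + c * (((q:ℝ) - (p:ℝ))/(q:ℝ)) := by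
    rw [mul_div_assoc']
    rw [← add_div]
    congr 1
    ring
  linear_combination hsum1 + hdiv1 + c * key

include hge in
lemma key_limit (c α : ℝ) (hα1 : α < 1)
    (hcount : (fun x : ℝ => (((hfin x).toFinset.card : ℝ) - c * x))
      =O[atTop] fun x : ℝ => x ^ α)
    (n : ℕ) (hn : 1 ≤ n) :
    Tendsto (fun x : ℝ => (∑ M ∈ (hfin (x / (n:ℝ))).toFinset, 1 / (Nrm M : ℝ))
        - ∑ M ∈ (hfin x).toFinset, 1 / (Nrm M : ℝ)) atTop (𝓝 (-(c * Real.log n))) := by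
  have hn0 : (0:ℝ) < (n:ℝ) := by exact_mod_cast hn
  have hdiv_tendsto : Tendsto (fun q : ℕ => q / n) atTop atTop := by
    refine tendsto_atTop_atTop.2 fun b => ⟨b * n, fun q hq => ?_⟩
    exact (Nat.le_div_iff_mul_le (by omega)).2 hq
  have h1p0 : Tendsto (fun q : ℕ => 1/((q/n : ℕ):ℝ)) atTop (𝓝 0) :=
    tendsto_one_div_atTop_nhds_zero_nat.comp hdiv_tendsto
  -- the main-term limit
  have hratio : Tendsto (fun q : ℕ => (q:ℝ)/((q/n : ℕ):ℝ)) atTop (𝓝 (n:ℝ)) := by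
    have hup' : Tendsto (fun q : ℕ => (n:ℝ) + (n:ℝ) * (1/((q/n:ℕ):ℝ))) atTop
        (𝓝 ((n:ℝ) + (n:ℝ) * 0)) := tendsto_const_nhds.add (h1p0.const_mul (n:ℝ))
    rw [mul_zero, add_zero] at hup'
    refine tendsto_of_tendsto_of_tendsto_of_le_of_le' tendsto_const_nhds hup' ?_ ?_
    · filter_upwards [hdiv_tendsto.eventually_ge_atTop 1] with q hq
      have hp0 : (0:ℝ) < ((q/n:ℕ):ℝ) := by exact_mod_cast hq
      rw [le_div_iff₀ hp0]
      have h1 : (q/n) * n ≤ q := Nat.div_mul_le_self q n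
      calc (n:ℝ) * ((q/n:ℕ):ℝ) = ((q/n:ℕ):ℝ) * (n:ℝ) := by ring
        _ ≤ (q:ℝ) := by exact_mod_cast h1
    · filter_upwards [hdiv_tendsto.eventually_ge_atTop 1] with q hq
      have hp0 : (0:ℝ) < ((q/n:ℕ):ℝ) := by exact_mod_cast hq
      rw [div_le_iff₀ hp0]
      have hqlt : q < n * (q/n) + n := by
        have h1 := Nat.div_add_mod q n
        have h2 : q % n < n := Nat.mod_lt q (by omega)
        omega
      have h3 : (q:ℝ) ≤ (n:ℝ) * ((q/n:ℕ):ℝ) + n := by exact_mod_cast le_of_lt hqlt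
      calc (q:ℝ) ≤ (n:ℝ) * ((q/n:ℕ):ℝ) + n := h3
        _ = ((n:ℝ) + (n:ℝ) * (1/((q/n:ℕ):ℝ))) * ((q/n:ℕ):ℝ) := by
            field_simp
  have hloglim : Tendsto (fun q : ℕ => Real.log q - Real.log ((q/n:ℕ):ℝ)) atTop
      (𝓝 (Real.log n)) := by
    have hcont : Tendsto (fun q : ℕ => Real.log ((q:ℝ)/((q/n:ℕ):ℝ))) atTop
        (𝓝 (Real.log n)) := ((Real.continuousAt_log (ne_of_gt hn0)).tendsto).comp hratio
    refine hcont.congr' ?_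
    filter_upwards [hdiv_tendsto.eventually_ge_atTop 1, eventually_ge_atTop 1] with q hp1 hq1
    have hp0 : ((q/n:ℕ):ℝ) ≠ 0 := by
      have : (0:ℝ) < ((q/n:ℕ):ℝ) := by exact_mod_cast hp1
      exact ne_of_gt this
    have hq0 : ((q:ℕ):ℝ) ≠ 0 := by
      have : (0:ℝ) < ((q:ℕ):ℝ) := by exact_mod_cast hq1
      exact ne_of_gt this
    exact Real.log_div hq0 hp0
  have hSlim : Tendsto (fun q : ℕ => ∑ m ∈ Finset.Ico (q/n) q, 1/((m:ℝ)+1)) atTop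
      (𝓝 (Real.log n)) := by
    have hlow' : Tendsto (fun q : ℕ =>
        (Real.log q - Real.log ((q/n:ℕ):ℝ)) - 1/((q/n:ℕ):ℝ)) atTop
        (𝓝 (Real.log n - 0)) := hloglim.sub h1p0
    rw [sub_zero] at hlow'
    refine tendsto_of_tendsto_of_tendsto_of_le_of_le' hlow' hloglim ?_ ?_
    · -- lower bound
      filter_upwards [hdiv_tendsto.eventually_ge_atTop 1] with q hp1
      have hpq : q/n ≤ q := Nat.div_le_self q n
      have htl : ∑ m ∈ Finset.Ico (q/n) q, (Real.log ((m:ℝ)+1) - Real.log m)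
          = Real.log q - Real.log ((q/n:ℕ):ℝ) := tele_log (q/n) q hpq
      have hb : ∑ m ∈ Finset.Ico (q/n) q, (Real.log ((m:ℝ)+1) - Real.log m)
          ≤ ∑ m ∈ Finset.Ico (q/n) q, 1/(m:ℝ) := by
        refine Finset.sum_le_sum fun m hm => ?_
        have hm1 : 1 ≤ m := le_trans hp1 (Finset.mem_Ico.1 hm).1
        have hm0 : (0:ℝ) < (m:ℝ) := by exact_mod_cast hm1
        have h := Real.log_le_sub_one_of_pos (x := ((m:ℝ)+1)/(m:ℝ)) (by positivity)
        rw [Real.log_div (by positivity) (ne_of_gt hm0)] at h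
        have he : ((m:ℝ)+1)/(m:ℝ) - 1 = 1/(m:ℝ) := by field_simp; ring
        linarith
      have hsum2 : ∑ m ∈ Finset.Ico (q/n) q, 1/(m:ℝ)
          = (∑ m ∈ Finset.Ico (q/n) q, 1/((m:ℝ)+1)) + (1/((q/n:ℕ):ℝ) - 1/(q:ℝ)) := by
        have he : ∀ m ∈ Finset.Ico (q/n) q,
            (1:ℝ)/(m:ℝ) = 1/((m:ℝ)+1) + (1/(m:ℝ) - 1/((m:ℝ)+1)) := fun m _ => by ring
        rw [Finset.sum_congr rfl he, Finset.sum_add_distrib, tele_inv (q/n) q hpq]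
      have hq0 : (0:ℝ) ≤ 1/(q:ℝ) := by positivity
      linarith
    · -- upper bound
      filter_upwards [hdiv_tendsto.eventually_ge_atTop 1] with q hp1
      have hpq : q/n ≤ q := Nat.div_le_self q n
      have htl : ∑ m ∈ Finset.Ico (q/n) q, (Real.log ((m:ℝ)+1) - Real.log m)
          = Real.log q - Real.log ((q/n:ℕ):ℝ) := tele_log (q/n) q hpq
      have hb : ∑ m ∈ Finset.Ico (q/n) q, 1/((m:ℝ)+1)
          ≤ ∑ m ∈ Finset.Ico (q/n) q, (Real.log ((m:ℝ)+1) - Real.log m) := by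
        refine Finset.sum_le_sum fun m hm => ?_
        have hm1 : 1 ≤ m := le_trans hp1 (Finset.mem_Ico.1 hm).1
        have hm0 : (0:ℝ) < (m:ℝ) := by exact_mod_cast hm1
        have h := Real.log_le_sub_one_of_pos (x := (m:ℝ)/((m:ℝ)+1)) (by positivity)
        rw [Real.log_div (ne_of_gt hm0) (by positivity)] at h
        have he : (m:ℝ)/((m:ℝ)+1) - 1 = -(1/((m:ℝ)+1)) := by field_simp; ring
        linarith
      linarith
  -- error term limit
  have hrpow1 : Tendsto (fun q : ℕ => ((q:ℕ):ℝ)^(α-1)) atTop (𝓝 0) := by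
    have h := (tendsto_rpow_neg_atTop (by linarith : (0:ℝ) < 1 - α)).comp
      (tendsto_natCast_atTop_atTop (R := ℝ))
    simpa [Function.comp_def, neg_sub] using h
  have hrpow2 : Tendsto (fun q : ℕ => (((q/n:ℕ)):ℝ)^(α-1)) atTop (𝓝 0) :=
    hrpow1.comp hdiv_tendsto
  have htail : Tendsto (fun q : ℕ => ∑' k : ℕ, (((k + q/n : ℕ)):ℝ)^(α-2)) atTop (𝓝 0) := by
    have h := (tendsto_sum_nat_add (fun m : ℕ => ((m:ℕ):ℝ)^(α-2))).comp hdiv_tendsto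
    simpa [Function.comp_def] using h
  obtain ⟨C0, hC0⟩ := hcount.bound
  set C := max C0 1 with hCdef
  have hCpos : (0:ℝ) < C := lt_of_lt_of_le one_pos (le_max_right _ _)
  obtain ⟨x₀, hx₀⟩ := eventually_atTop.1 hC0
  set m₀ : ℕ := max 1 ⌈x₀⌉₊ with hm₀
  set Efun : ℕ → ℝ := fun m => ((hfin ((m:ℕ):ℝ)).toFinset.card : ℝ) - c*((m:ℕ):ℝ) with hEfun
  have hEb : ∀ m : ℕ, m₀ ≤ m → |Efun m| ≤ C * ((m:ℕ):ℝ)^α := by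
    intro m hm
    have hxm : x₀ ≤ ((m:ℕ):ℝ) := by
      refine le_trans (Nat.le_ceil x₀) ?_
      exact_mod_cast le_trans (le_max_right 1 ⌈x₀⌉₊) hm
    have h := hx₀ ((m:ℕ):ℝ) hxm
    rw [Real.norm_eq_abs, Real.norm_eq_abs,
      abs_of_nonneg (Real.rpow_nonneg (Nat.cast_nonneg m) α)] at h
    calc |Efun m| ≤ C0 * ((m:ℕ):ℝ)^α := h
      _ ≤ C * ((m:ℕ):ℝ)^α := by
          exact mul_le_mul_of_nonneg_right (le_max_left _ _)
            (Real.rpow_nonneg (Nat.cast_nonneg m) α)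
  set R : ℕ → ℝ := fun q => (Efun q - Efun (q/n))/((q:ℕ):ℝ)
      + ∑ m ∈ Finset.Ico (q/n) q, (Efun m - Efun (q/n)) * (1/(m:ℝ) - 1/((m:ℝ)+1)) with hRdef
  have hRlim : Tendsto R atTop (𝓝 0) := by
    rw [tendsto_zero_iff_norm_tendsto_zero]
    have hglim : Tendsto (fun q : ℕ => (C*((q:ℕ):ℝ)^(α-1) + C*(((q/n:ℕ)):ℝ)^(α-1))
        + (C * ∑' k : ℕ, (((k + q/n : ℕ)):ℝ)^(α-2) + C*(((q/n:ℕ)):ℝ)^(α-1))) atTop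
        (𝓝 ((C*0 + C*0) + (C*0 + C*0))) :=
      ((hrpow1.const_mul C).add (hrpow2.const_mul C)).add
        ((htail.const_mul C).add (hrpow2.const_mul C))
    rw [mul_zero, add_zero, add_zero] at hglim
    refine squeeze_zero' (Eventually.of_forall fun q => norm_nonneg _) ?_ hglim
    filter_upwards [hdiv_tendsto.eventually_ge_atTop m₀, eventually_ge_atTop 1] with q hpm hq1
    have hp1 : 1 ≤ q/n := le_trans (le_max_left 1 ⌈x₀⌉₊) hpm
    have hpq : q/n ≤ q := Nat.div_le_self q n
    have hqm : m₀ ≤ q := le_trans hpm hpq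
    have hp0R : (0:ℝ) < ((q/n:ℕ):ℝ) := by exact_mod_cast hp1
    have hq0R : (0:ℝ) < ((q:ℕ):ℝ) := by exact_mod_cast hq1
    have hEq := hEb q hqm
    have hEp := hEb (q/n) hpm
    have hEqnn : 0 ≤ |Efun q| := abs_nonneg _
    have hEpnn : 0 ≤ |Efun (q/n)| := abs_nonneg _
    -- component bounds
    have hA1 : |Efun q|/((q:ℕ):ℝ) ≤ C*((q:ℕ):ℝ)^(α-1) := by
      calc |Efun q|/((q:ℕ):ℝ) ≤ (C*((q:ℕ):ℝ)^α)/((q:ℕ):ℝ) := by gcongr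
        _ = C*((q:ℕ):ℝ)^(α-1) := by
            rw [mul_div_assoc, Real.rpow_sub hq0R, Real.rpow_one]
    have hA2 : |Efun (q/n)|/((q:ℕ):ℝ) ≤ C*(((q/n:ℕ)):ℝ)^(α-1) := by
      calc |Efun (q/n)|/((q:ℕ):ℝ) ≤ |Efun (q/n)|/(((q/n:ℕ)):ℝ) := by
            gcongr
        _ ≤ (C*(((q/n:ℕ)):ℝ)^α)/(((q/n:ℕ)):ℝ) := by gcongr
        _ = C*(((q/n:ℕ)):ℝ)^(α-1) := by
            rw [mul_div_assoc, Real.rpow_sub hp0R, Real.rpow_one]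
    have hA4 : |Efun (q/n)| * (1/(((q/n:ℕ)):ℝ) - 1/((q:ℕ):ℝ))
        ≤ C*(((q/n:ℕ)):ℝ)^(α-1) := by
      have h1 : 1/(((q/n:ℕ)):ℝ) - 1/((q:ℕ):ℝ) ≤ 1/(((q/n:ℕ)):ℝ) := by
        have : (0:ℝ) ≤ 1/((q:ℕ):ℝ) := by positivity
        linarith
      have h2 : (0:ℝ) ≤ 1/(((q/n:ℕ)):ℝ) - 1/((q:ℕ):ℝ) := by
        have := one_div_le_one_div_of_le hp0R (by exact_mod_cast hpq : ((q/n:ℕ):ℝ) ≤ ((q:ℕ):ℝ))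
        linarith
      calc |Efun (q/n)| * (1/(((q/n:ℕ)):ℝ) - 1/((q:ℕ):ℝ))
          ≤ (C*(((q/n:ℕ)):ℝ)^α) * (1/(((q/n:ℕ)):ℝ)) := by gcongr
        _ = C*(((q/n:ℕ)):ℝ)^(α-1) := by
            rw [mul_one_div, mul_div_assoc, Real.rpow_sub hp0R, Real.rpow_one]
    have hA3 : ∑ m ∈ Finset.Ico (q/n) q, |Efun m| * (1/(m:ℝ) - 1/((m:ℝ)+1))
        ≤ C * ∑' k : ℕ, (((k + q/n : ℕ)):ℝ)^(α-2) := by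
      have hterm : ∀ m ∈ Finset.Ico (q/n) q,
          |Efun m| * (1/(m:ℝ) - 1/((m:ℝ)+1)) ≤ C * ((m:ℕ):ℝ)^(α-2) := by
        intro m hm
        have hm₀m : m₀ ≤ m := le_trans hpm (Finset.mem_Ico.1 hm).1
        have hm1 : 1 ≤ m := le_trans (le_max_left 1 ⌈x₀⌉₊) hm₀m
        have hm0R : (0:ℝ) < (m:ℝ) := by exact_mod_cast hm1
        have hgm_eq : 1/(m:ℝ) - 1/((m:ℝ)+1) = 1/((m:ℝ)*((m:ℝ)+1)) := by
          field_simp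
          ring
        have hgm_le : 1/((m:ℝ)*((m:ℝ)+1)) ≤ 1/((m:ℝ)*(m:ℝ)) := by
          gcongr
          linarith
        calc |Efun m| * (1/(m:ℝ) - 1/((m:ℝ)+1))
            ≤ (C*((m:ℕ):ℝ)^α) * (1/((m:ℝ)*(m:ℝ))) := by
              rw [hgm_eq]
              gcongr
              exact hEb m hm₀m
          _ = C * ((m:ℕ):ℝ)^(α-2) := by
              rw [show (m:ℝ)*(m:ℝ) = (m:ℝ)^((2:ℕ):ℝ) by
                rw [Real.rpow_natCast]; ring]
              rw [mul_one_div, mul_div_assoc, ← Real.rpow_sub hm0R]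
              norm_num
      calc ∑ m ∈ Finset.Ico (q/n) q, |Efun m| * (1/(m:ℝ) - 1/((m:ℝ)+1))
          ≤ ∑ m ∈ Finset.Ico (q/n) q, C * ((m:ℕ):ℝ)^(α-2) := Finset.sum_le_sum hterm
        _ = C * ∑ m ∈ Finset.Ico (q/n) q, ((m:ℕ):ℝ)^(α-2) := by rw [Finset.mul_sum]
        _ ≤ C * ∑' k : ℕ, (((k + q/n : ℕ)):ℝ)^(α-2) := by
            have hsummable : Summable (fun k : ℕ => (((k + q/n:ℕ)):ℝ)^(α-2)) := by
              have h1 : Summable (fun m : ℕ => ((m:ℕ):ℝ)^(α-2)) :=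
                Real.summable_nat_rpow.2 (by linarith)
              exact (summable_nat_add_iff (q/n)).2 h1
            gcongr
            calc ∑ m ∈ Finset.Ico (q/n) q, ((m:ℕ):ℝ)^(α-2)
                = ∑ i ∈ Finset.range (q - q/n), (((q/n + i:ℕ)):ℝ)^(α-2) := by
                  rw [Finset.sum_Ico_eq_sum_range]
              _ = ∑ i ∈ Finset.range (q - q/n), (((i + q/n:ℕ)):ℝ)^(α-2) := by
                  refine Finset.sum_congr rfl fun i _ => by rw [add_comm]
              _ ≤ ∑' k : ℕ, (((k + q/n:ℕ)):ℝ)^(α-2) :=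
                  hsummable.sum_le_tsum _ (fun i _ => Real.rpow_nonneg (Nat.cast_nonneg _) _)
    -- triangle inequality assembly
    have hB1 : ‖R q‖ ≤ |Efun q|/((q:ℕ):ℝ) + |Efun (q/n)|/((q:ℕ):ℝ)
        + (∑ m ∈ Finset.Ico (q/n) q, |Efun m| * (1/(m:ℝ) - 1/((m:ℝ)+1))
           + |Efun (q/n)| * (1/(((q/n:ℕ)):ℝ) - 1/((q:ℕ):ℝ))) := by
      rw [Real.norm_eq_abs, hRdef]
      have ht1 : |(Efun q - Efun (q/n))/((q:ℕ):ℝ)|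
          ≤ |Efun q|/((q:ℕ):ℝ) + |Efun (q/n)|/((q:ℕ):ℝ) := by
        rw [abs_div, abs_of_pos hq0R, ← add_div]
        gcongr
        exact abs_sub _ _
      have ht2 : |∑ m ∈ Finset.Ico (q/n) q, (Efun m - Efun (q/n)) * (1/(m:ℝ) - 1/((m:ℝ)+1))|
          ≤ ∑ m ∈ Finset.Ico (q/n) q, |Efun m| * (1/(m:ℝ) - 1/((m:ℝ)+1))
            + |Efun (q/n)| * (1/(((q/n:ℕ)):ℝ) - 1/((q:ℕ):ℝ)) := by
        calc |∑ m ∈ Finset.Ico (q/n) q, (Efun m - Efun (q/n)) * (1/(m:ℝ) - 1/((m:ℝ)+1))|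
            ≤ ∑ m ∈ Finset.Ico (q/n) q, |(Efun m - Efun (q/n)) * (1/(m:ℝ) - 1/((m:ℝ)+1))| :=
              Finset.abs_sum_le_sum_abs _ _
          _ ≤ ∑ m ∈ Finset.Ico (q/n) q,
                (|Efun m| + |Efun (q/n)|) * (1/(m:ℝ) - 1/((m:ℝ)+1)) := by
              refine Finset.sum_le_sum fun m hm => ?_
              have hm1 : 1 ≤ m := le_trans hp1 (Finset.mem_Ico.1 hm).1
              have hm0R : (0:ℝ) < (m:ℝ) := by exact_mod_cast hm1
              have hgm : (0:ℝ) ≤ 1/(m:ℝ) - 1/((m:ℝ)+1) := by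
                have := one_div_le_one_div_of_le hm0R (by linarith : (m:ℝ) ≤ (m:ℝ)+1)
                linarith
              rw [abs_mul, abs_of_nonneg hgm]
              gcongr
              exact abs_sub _ _
          _ = ∑ m ∈ Finset.Ico (q/n) q, |Efun m| * (1/(m:ℝ) - 1/((m:ℝ)+1))
              + |Efun (q/n)| * (1/(((q/n:ℕ)):ℝ) - 1/((q:ℕ):ℝ)) := by
              have he : ∀ m ∈ Finset.Ico (q/n) q,
                  (|Efun m| + |Efun (q/n)|) * (1/(m:ℝ) - 1/((m:ℝ)+1))
                  = |Efun m| * (1/(m:ℝ) - 1/((m:ℝ)+1))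
                    + |Efun (q/n)| * (1/(m:ℝ) - 1/((m:ℝ)+1)) := fun m _ => by ring
              rw [Finset.sum_congr rfl he, Finset.sum_add_distrib, ← Finset.mul_sum,
                tele_inv (q/n) q hpq]
      calc |(Efun q - Efun (q/n))/((q:ℕ):ℝ)
            + ∑ m ∈ Finset.Ico (q/n) q, (Efun m - Efun (q/n)) * (1/(m:ℝ) - 1/((m:ℝ)+1))|
          ≤ |(Efun q - Efun (q/n))/((q:ℕ):ℝ)|
            + |∑ m ∈ Finset.Ico (q/n) q, (Efun m - Efun (q/n)) * (1/(m:ℝ) - 1/((m:ℝ)+1))| :=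
            abs_add_le _ _
        _ ≤ _ := by
            have := add_le_add ht1 ht2
            linarith
    linarith [hA1, hA2, hA3, hA4, hB1]
  -- assemble the discrete limit
  have hmain : Tendsto (fun q : ℕ =>
      (∑ M ∈ (hfin ((q/n:ℕ):ℝ)).toFinset, 1 / (Nrm M : ℝ))
        - ∑ M ∈ (hfin ((q:ℕ):ℝ)).toFinset, 1 / (Nrm M : ℝ)) atTop
      (𝓝 (-(c * Real.log n))) := by
    have h1 : Tendsto (fun q : ℕ =>
        c * (∑ m ∈ Finset.Ico (q/n) q, 1/((m:ℝ)+1)) + R q) atTop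
        (𝓝 (c * Real.log n + 0)) := (hSlim.const_mul c).add hRlim
    rw [add_zero] at h1
    have h2 : Tendsto (fun q : ℕ =>
        (∑ M ∈ (hfin ((q:ℕ):ℝ)).toFinset, 1 / (Nrm M : ℝ))
          - ∑ M ∈ (hfin ((q/n:ℕ):ℝ)).toFinset, 1 / (Nrm M : ℝ)) atTop
        (𝓝 (c * Real.log n)) := by
      refine h1.congr' ?_
      filter_upwards [hdiv_tendsto.eventually_ge_atTop 1] with q hp1
      rw [decomp_identity Nrm hge hfin c n q hp1]
    exact h2.neg.congr fun q => by ring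
  -- transfer to the real variable
  have hfloor : ∀ x : ℝ, 0 ≤ x → (hfin x).toFinset = (hfin ((⌊x⌋₊:ℕ):ℝ)).toFinset := by
    intro x hx
    ext M
    rw [hmem_lemma Nrm hfin, hmem_lemma Nrm hfin]
    have hkcast : (((Nrm M).toNat:ℕ):ℝ) = (Nrm M:ℝ) := by
      exact_mod_cast Int.toNat_of_nonneg (le_trans zero_le_one (hge M))
    rw [← hkcast]
    constructor
    · intro h
      exact_mod_cast Nat.le_floor h
    · intro h
      have h2 : (Nrm M).toNat ≤ ⌊x⌋₊ := by exact_mod_cast h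
      exact le_trans (by exact_mod_cast h2) (Nat.floor_le hx)
  have hcomp := hmain.comp (tendsto_nat_floor_atTop (α := ℝ))
  refine hcomp.congr' ?_
  filter_upwards [eventually_ge_atTop (0:ℝ)] with x hx
  have e1 : (hfin x).toFinset = (hfin ((⌊x⌋₊:ℕ):ℝ)).toFinset := hfloor x hx
  have e2 : (hfin (x/(n:ℝ))).toFinset = (hfin ((⌊x⌋₊/n:ℕ):ℝ)).toFinset := by
    rw [hfloor _ (div_nonneg hx (le_of_lt hn0)), Nat.floor_div_natCast]
  simp only [Function.comp_apply]
  rw [e1, e2]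
end Key


/-- If `X` is at most countable and `#{A : N(A) ≤ x} = c·x + O(x^α)` with `c > 0` and
`0 ≤ α < 1`, then for `K ≠ 0` the series `∑_M C_K(M)/N(M)`, summed in increasing order
of the norm, converges to `−c·Λ(K)` where `Λ(K) = ∑_{D ≤ K} μ(K − D)·log N(D)`. -/
theorem tendsto_sum_ram_div_norm {X : Type*} [Nonempty X] [Countable X] [DecidableEq X]
    (Nrm : (X →₀ ℕ) → ℤ)
    (hge : ∀ A, 1 ≤ Nrm A) (h0 : Nrm 0 = 1) (hgt : ∀ A, A ≠ 0 → 1 < Nrm A)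
    (hmul : ∀ A B, Nrm (A + B) = Nrm A * Nrm B)
    (c α : ℝ) (hc : 0 < c) (hα0 : 0 ≤ α) (hα1 : α < 1)
    (hfin : ∀ x : ℝ, {A : X →₀ ℕ | (Nrm A : ℝ) ≤ x}.Finite)
    (hcount : (fun x : ℝ => (((hfin x).toFinset.card : ℝ) - c * x))
      =O[atTop] fun x : ℝ => x ^ α)
    (K : X →₀ ℕ) (hK : K ≠ 0) :
    Tendsto (fun x : ℝ => ∑ M ∈ (hfin x).toFinset, (ram Nrm K M : ℝ) / (Nrm M : ℝ))
      atTop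
      (𝓝 (-c * ∑ D ∈ Finset.Iic K, (mob (K - D) : ℝ) * Real.log (Nrm D))) := by
  have hmobsum : ∑ D ∈ Finset.Iic K, ((mob (K - D) : ℤ) : ℝ) = 0 := by
    exact_mod_cast sum_mob_sub_eq_zero K hK
  have hterm : ∀ D ∈ Finset.Iic K, Tendsto (fun x : ℝ =>
      (mob (K - D) : ℝ) * ((∑ M ∈ (hfin (x / (Nrm D : ℝ))).toFinset, 1 / (Nrm M : ℝ))
        - ∑ M ∈ (hfin x).toFinset, 1 / (Nrm M : ℝ))) atTop
      (𝓝 ((mob (K - D) : ℝ) * (-(c * Real.log (Nrm D : ℝ))))) := by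
    intro D _
    refine Tendsto.const_mul _ ?_
    have hnD : 1 ≤ (Nrm D).toNat := by have := hge D; omega
    have hcast : (((Nrm D).toNat : ℕ) : ℝ) = (Nrm D : ℝ) := by
      exact_mod_cast Int.toNat_of_nonneg (le_trans zero_le_one (hge D))
    have h := key_limit Nrm hge hfin c α hα1 hcount (Nrm D).toNat hnD
    rw [hcast] at h
    exact h
  have hsum := tendsto_finset_sum (Finset.Iic K) hterm
  have hlim_eq : ∑ D ∈ Finset.Iic K, (mob (K - D) : ℝ) * (-(c * Real.log (Nrm D : ℝ)))
      = -c * ∑ D ∈ Finset.Iic K, (mob (K - D) : ℝ) * Real.log (Nrm D : ℝ) := by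
    rw [Finset.mul_sum]
    exact Finset.sum_congr rfl fun D _ => by ring
  rw [hlim_eq] at hsum
  refine hsum.congr fun x => ?_
  rw [sum_ram_eq Nrm hge hmul hfin K x]
  have hexp : ∀ D ∈ Finset.Iic K,
      (mob (K - D) : ℝ) * ((∑ M ∈ (hfin (x / (Nrm D : ℝ))).toFinset, 1 / (Nrm M : ℝ))
        - ∑ M ∈ (hfin x).toFinset, 1 / (Nrm M : ℝ))
      = (mob (K - D) : ℝ) * (∑ M ∈ (hfin (x / (Nrm D : ℝ))).toFinset, 1 / (Nrm M : ℝ))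
        - (mob (K - D) : ℝ) * ∑ M ∈ (hfin x).toFinset, 1 / (Nrm M : ℝ) :=
    fun D _ => by ring
  rw [Finset.sum_congr rfl hexp, Finset.sum_sub_distrib, ← Finset.sum_mul, hmobsum,
    zero_mul, sub_zero]
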